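/- Let ρ > 1. The area (2-dimensional Lebesgue measure) of the Q cell Q_△(ρ) of the origin in the unit triangular lattice is less than 2√3/(1 + ρ)². -/

import Mathlib

open MeasureTheory Real

section QCellAux

open Set

private lemma qcell_aux_proj (ρ vx vy x y : ℝ) (hρ : 1 < ρ) (hv : vx^2 + vy^2 = 1)
    (h : ρ^2*(x^2+y^2) < (x-vx)^2 + (y-vy)^2) : vx*x + vy*y < 1/(1+ρ) := by
  have hcs : (vx*x+vy*y)^2 ≤ x^2+y^2 := by nlinarith [sq_nonneg (vx*y - vy*x)]
  have h2 : (ρ^2-1)*(x^2+y^2) < 1 - 2*(vx*x+vy*y) := by nlinarith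
  have hA : (ρ^2-1)*(vx*x+vy*y)^2 ≤ (ρ^2-1)*(x^2+y^2) :=
    mul_le_mul_of_nonneg_left hcs (by nlinarith)
  rw [lt_div_iff₀ (by linarith)]
  by_contra hc
  push_neg at hc
  have hu : 0 < vx*x+vy*y := by nlinarith
  have hprod : 0 ≤ ((vx*x+vy*y)*(1+ρ) - 1) * ((ρ-1)*(vx*x+vy*y) + 1) :=
    mul_nonneg (by linarith) (by nlinarith)
  nlinarith [hprod, hA, h2]

private lemma qcell_aux_b (ρ y n b : ℝ) (hρ : 1 < ρ) (hb : 0 < b)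
    (hbe : (ρ^2-1)*b^2 + Real.sqrt 3 * b = 1)
    (hn : y^2 ≤ n) (h : (ρ^2-1)*n < 1 - Real.sqrt 3 * y) : y < b := by
  by_contra hc
  push_neg at hc
  have hA : (ρ^2-1)*y^2 ≤ (ρ^2-1)*n := mul_le_mul_of_nonneg_left hn (by nlinarith)
  have h1 : 0 ≤ (y - b) * ((ρ^2-1)*(y+b) + Real.sqrt 3) := by
    have h3 : 0 ≤ (ρ^2-1)*(y+b) := mul_nonneg (by nlinarith) (by linarith)
    have := Real.sqrt_nonneg 3
    exact mul_nonneg (by linarith) (by linarith)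
  nlinarith [h1, hA]

private lemma qcell_abs_sq (ρ : ℝ) (hρ : 0 ≤ ρ) (w c : ℂ)
    (h : ‖w-c‖ > ρ * ‖w‖) :
    ρ^2 * (w.re^2 + w.im^2) < (w.re - c.re)^2 + (w.im - c.im)^2 := by
  have h1 : (ρ * ‖w‖)^2 < (‖w-c‖)^2 := by
    have h0 : 0 ≤ ρ * ‖w‖ := mul_nonneg hρ (norm_nonneg w)
    nlinarith
  rw [mul_pow, Complex.sq_norm, Complex.sq_norm, Complex.normSq_apply, Complex.normSq_apply,
    Complex.sub_re, Complex.sub_im] at h1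
  nlinarith

private lemma qcell_extract (ρ : ℝ) (hρ : 0 ≤ ρ) (w : ℂ) (m n : ℤ)
    (h : ‖w - ((m : ℂ) * 1 + (n : ℂ) * (1 / 2 + Complex.I * (Real.sqrt 3 / 2 : ℝ)))‖
      > ρ * ‖w‖) :
    ρ^2 * (w.re^2 + w.im^2) <
      (w.re - ((m:ℝ) + (n:ℝ)/2))^2 + (w.im - (n:ℝ)*(Real.sqrt 3/2))^2 := by
  have h2 := qcell_abs_sq ρ hρ w _ h
  have hre : (((m : ℂ) * 1 + (n : ℂ) * (1 / 2 + Complex.I * (Real.sqrt 3 / 2 : ℝ)))).re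
      = (m:ℝ) + (n:ℝ)/2 := by
    simp [Complex.add_re, Complex.mul_re, Complex.add_im, Complex.div_re, Complex.div_im]
    ring
  have him : (((m : ℂ) * 1 + (n : ℂ) * (1 / 2 + Complex.I * (Real.sqrt 3 / 2 : ℝ)))).im
      = (n:ℝ)*(Real.sqrt 3/2) := by
    simp [Complex.add_im, Complex.mul_im, Complex.add_re, Complex.div_re, Complex.div_im]
  rw [hre, him] at h2
  exact h2

private lemma qcell_mem_region (ρ a b : ℝ) (hρ : 1 < ρ) (ha : a = 1/(1+ρ)) (hbpos : 0 < b)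
    (hbe : (ρ^2-1)*b^2 + Real.sqrt 3 * b = 1) (w : ℂ)
    (hw : ∀ m n : ℤ, (m, n) ≠ (0, 0) →
        ‖w - ((m : ℂ) * 1 + (n : ℂ) * (1 / 2 + Complex.I * (Real.sqrt 3 / 2 : ℝ)))‖
          > ρ * ‖w‖) :
    w.re ∈ Ioo (-a) a ∧
      w.im ∈ Ioo (-(min b ((2*a - |w.re|)/Real.sqrt 3))) (min b ((2*a - |w.re|)/Real.sqrt 3)) := by
  have hs3pos : 0 < Real.sqrt 3 := Real.sqrt_pos.mpr (by norm_num)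
  have h3 : Real.sqrt 3 ^ 2 = 3 := Real.sq_sqrt (by norm_num)
  have hρ0' : (0:ℝ) ≤ ρ := by linarith
  set x := w.re
  set y := w.im
  have e10 := qcell_extract ρ hρ0' w 1 0 (hw 1 0 (by decide))
  have em10 := qcell_extract ρ hρ0' w (-1) 0 (hw (-1) 0 (by decide))
  have e01 := qcell_extract ρ hρ0' w 0 1 (hw 0 1 (by decide))
  have e0m1 := qcell_extract ρ hρ0' w 0 (-1) (hw 0 (-1) (by decide))
  have em11 := qcell_extract ρ hρ0' w (-1) 1 (hw (-1) 1 (by decide))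
  have e1m1 := qcell_extract ρ hρ0' w 1 (-1) (hw 1 (-1) (by decide))
  push_cast at e10 em10 e01 e0m1 em11 e1m1
  have hv1 : (1/2:ℝ)^2 + (Real.sqrt 3/2)^2 = 1 := by
    rw [div_pow, div_pow, h3]; norm_num
  subst ha
  have u1 := qcell_aux_proj ρ 1 0 x y hρ (by norm_num) (by linarith [e10])
  have u2 := qcell_aux_proj ρ (-1) 0 x y hρ (by norm_num) (by linarith [em10])
  have u3 := qcell_aux_proj ρ (1/2) (Real.sqrt 3/2) x y hρ (by linear_combination hv1)
    (by linarith [e01])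
  have u4 := qcell_aux_proj ρ (-(1/2)) (Real.sqrt 3/2) x y hρ (by linear_combination hv1)
    (by linarith [em11])
  have u5 := qcell_aux_proj ρ (1/2) (-(Real.sqrt 3/2)) x y hρ (by linear_combination hv1)
    (by linarith [e1m1])
  have u6 := qcell_aux_proj ρ (-(1/2)) (-(Real.sqrt 3/2)) x y hρ (by linear_combination hv1)
    (by linarith [e0m1])
  have hyb : y < b := by
    refine qcell_aux_b ρ y (x^2+y^2) b hρ hbpos hbe (by linarith [sq_nonneg x]) ?_
    linarith [e01, em11, h3]
  have hyb' : -y < b := by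
    refine qcell_aux_b ρ (-y) (x^2+y^2) b hρ hbpos hbe (by linarith [sq_nonneg x]) ?_
    linarith [e0m1, e1m1, h3]
  refine ⟨⟨by linarith, by linarith⟩, ⟨?_, ?_⟩⟩
  · rw [neg_lt]
    refine lt_min hyb' ?_
    rw [lt_div_iff₀ hs3pos]
    rcases abs_cases x with ⟨h', _⟩ | ⟨h', _⟩ <;> linarith [u5, u6]
  · refine lt_min hyb ?_
    rw [lt_div_iff₀ hs3pos]
    rcases abs_cases x with ⟨h', _⟩ | ⟨h', _⟩ <;> linarith [u3, u4]

private lemma qcell_measure_lt (ρ : ℝ) (hρ : 1 < ρ) (b : ℝ) (hbpos : 0 < b)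
    (hb2a : Real.sqrt 3 * b < 2*(1/(1+ρ)))
    (Q : Set ℂ)
    (hsub : ∀ w ∈ Q, w.re ∈ Ioo (-(1/(1+ρ))) (1/(1+ρ)) ∧
      w.im ∈ Ioo (-(min b ((2*(1/(1+ρ)) - |w.re|)/Real.sqrt 3)))
        (min b ((2*(1/(1+ρ)) - |w.re|)/Real.sqrt 3))) :
    volume Q < ENNReal.ofReal (2 * Real.sqrt 3 / (1 + ρ) ^ 2) := by
  have hρ0 : (0:ℝ) < 1 + ρ := by linarith
  have hs3pos : 0 < Real.sqrt 3 := Real.sqrt_pos.mpr (by norm_num)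
  have h3 : Real.sqrt 3 ^ 2 = 3 := Real.sq_sqrt (by norm_num)
  set a : ℝ := 1/(1+ρ) with ha
  have hapos : 0 < a := by positivity
  set g : ℝ → ℝ := fun x => min b ((2*a - |x|)/Real.sqrt 3) with hg
  have hgcont : Continuous g :=
    continuous_const.min ((continuous_const.sub continuous_abs).div_const _)
  have hgint : IntegrableOn g (Ioo (-a) a) :=
    (hgcont.integrableOn_Icc).mono_set Ioo_subset_Icc_self
  have hR : MeasurableSet (regionBetween (fun x => -g x) g (Ioo (-a) a)) :=
    measurableSet_regionBetween hgcont.neg.measurable hgcont.measurable measurableSet_Ioo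
  have hQsub : Q ⊆ Complex.measurableEquivRealProd ⁻¹'
      (regionBetween (fun x => -g x) g (Ioo (-a) a)) := by
    intro w hw
    obtain ⟨h1, h2⟩ := hsub w hw
    rw [Set.mem_preimage, Complex.measurableEquivRealProd_apply]
    exact ⟨h1, h2⟩
  have hgle : ∀ x ∈ Ioo (-a) a, (fun x => -g x) x ≤ g x := by
    intro x hx
    have : 0 ≤ g x := le_min hbpos.le (by
      rw [le_div_iff₀ hs3pos]
      rcases abs_cases x with ⟨h', _⟩ | ⟨h', _⟩ <;> simp at hx ⊢ <;> nlinarith [hx.1, hx.2])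
    simp only
    linarith
  have hvol : (volume : Measure (ℝ × ℝ)) (regionBetween (fun x => -g x) g (Ioo (-a) a))
      = ENNReal.ofReal (∫ x in Ioo (-a) a, (g - fun x => -g x) x) := by
    rw [MeasureTheory.Measure.volume_eq_prod]
    exact volume_regionBetween_eq_integral hgint.neg hgint measurableSet_Ioo hgle
  have hint2 : (∫ x in Ioo (-a) a, (g - fun x => -g x) x) = ∫ x in (-a)..a, 2 * g x := by
    have hfun : (g - fun x => -g x) = fun x => 2 * g x := by
      funext x; simp only [Pi.sub_apply, sub_neg_eq_add]; ring
    rw [hfun, intervalIntegral.integral_of_le (by linarith), integral_Ioc_eq_integral_Ioo]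
  have habs : (∫ x in (-a)..a, |x|) = a^2 := by
    have hi1 : (∫ x in (-a)..(0:ℝ), |x|) = a^2/2 := by
      rw [intervalIntegral.integral_congr (g := fun x => -x)
        (fun x hx => by
          rw [uIcc_of_le (by linarith : -a ≤ 0)] at hx
          exact abs_of_nonpos hx.2)]
      rw [intervalIntegral.integral_neg, integral_id]
      ring
    have hi2 : (∫ x in (0:ℝ)..a, |x|) = a^2/2 := by
      rw [intervalIntegral.integral_congr (g := fun x => x)
        (fun x hx => by
          rw [uIcc_of_le (by linarith : (0:ℝ) ≤ a)] at hx
          exact abs_of_nonneg hx.1)]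
      rw [integral_id]
      ring
    rw [← intervalIntegral.integral_add_adjacent_intervals
      ((continuous_abs.intervalIntegrable (-a) 0)) ((continuous_abs.intervalIntegrable 0 a)),
      hi1, hi2]
    ring
  have hval : (∫ x in (-a)..a, (2/Real.sqrt 3) * (2*a - |x|)) = 2 * Real.sqrt 3 / (1+ρ)^2 := by
    rw [intervalIntegral.integral_const_mul,
      intervalIntegral.integral_sub (intervalIntegrable_const)
        (continuous_abs.intervalIntegrable _ _),
      intervalIntegral.integral_const, habs]
    have key : (2:ℝ)/Real.sqrt 3 * 3 = 2*Real.sqrt 3 := by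
      rw [div_mul_eq_mul_div, div_eq_iff hs3pos.ne']
      linear_combination (-2)*h3
    rw [smul_eq_mul,
      show (2:ℝ)/Real.sqrt 3 * ((a - -a)*(2*a) - a^2) = ((2:ℝ)/Real.sqrt 3 * 3) * a^2 from by ring,
      key, ha]
    field_simp
  have hlt : (∫ x in (-a)..a, 2 * g x) < ∫ x in (-a)..a, (2/Real.sqrt 3) * (2*a - |x|) := by
    refine intervalIntegral.integral_lt_integral_of_continuousOn_of_le_of_exists_lt
      (by linarith) ((continuous_const.mul hgcont).continuousOn)
      ((continuous_const.mul (continuous_const.sub continuous_abs)).continuousOn) ?_ ?_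
    · intro x hx
      have h1 : g x ≤ (2*a - |x|)/Real.sqrt 3 := min_le_right _ _
      have h2 : (2/Real.sqrt 3) * (2*a - |x|) = 2 * ((2*a - |x|)/Real.sqrt 3) := by ring
      rw [h2]
      linarith
    · refine ⟨0, ⟨by linarith, by linarith⟩, ?_⟩
      have h1 : g 0 ≤ b := min_le_left _ _
      have h2 : b < (2*a - |(0:ℝ)|)/Real.sqrt 3 := by
        rw [lt_div_iff₀ hs3pos]
        simp only [abs_zero, sub_zero]
        nlinarith [hb2a]
      have h3' : (2/Real.sqrt 3) * (2*a - |(0:ℝ)|) = 2 * ((2*a - |(0:ℝ)|)/Real.sqrt 3) := by ring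
      rw [h3']
      nlinarith [h1, h2]
  calc volume Q ≤ volume (Complex.measurableEquivRealProd ⁻¹'
        (regionBetween (fun x => -g x) g (Ioo (-a) a))) := measure_mono hQsub
    _ = (volume : Measure (ℝ × ℝ)) (regionBetween (fun x => -g x) g (Ioo (-a) a)) :=
        Complex.volume_preserving_equiv_real_prod.measure_preimage hR.nullMeasurableSet
    _ = ENNReal.ofReal (∫ x in Ioo (-a) a, (g - fun x => -g x) x) := hvol
    _ < ENNReal.ofReal (2 * Real.sqrt 3 / (1 + ρ) ^ 2) := by
        rw [hint2]
        refine (ENNReal.ofReal_lt_ofReal_iff (by positivity)).mpr ?_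
        rw [← hval]
        exact hlt

end QCellAux

/-- The area of the Q cell of the origin in the unit triangular lattice (generated by `1` and
`1/2 + i·√3/2`) is less than `2√3/(1 + ρ)²` for `ρ > 1`. -/
theorem stmt_16 (ρ : ℝ) (hρ : 1 < ρ) :
    volume {w : ℂ | ∀ m n : ℤ, (m, n) ≠ (0, 0) →
        ‖w - ((m : ℂ) * 1 + (n : ℂ) * (1 / 2 + Complex.I * (Real.sqrt 3 / 2 : ℝ)))‖
          > ρ * ‖w‖} <
      ENNReal.ofReal (2 * Real.sqrt 3 / (1 + ρ) ^ 2) := by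
  have hρ0 : (0:ℝ) < 1 + ρ := by linarith
  have hs3pos : 0 < Real.sqrt 3 := Real.sqrt_pos.mpr (by norm_num)
  have h3 : Real.sqrt 3 ^ 2 = 3 := Real.sq_sqrt (by norm_num)
  have hden : 0 < ρ^2 - 1 := by nlinarith
  have hs2 : Real.sqrt (4*ρ^2-1) ^ 2 = 4*ρ^2-1 := Real.sq_sqrt (by nlinarith)
  have hsgt : Real.sqrt 3 < Real.sqrt (4*ρ^2-1) := Real.sqrt_lt_sqrt (by norm_num) (by nlinarith)
  set b : ℝ := (Real.sqrt (4*ρ^2-1) - Real.sqrt 3)/(2*(ρ^2-1)) with hbdef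
  have hbpos : 0 < b := div_pos (by linarith) (by linarith)
  have hbe : (ρ^2-1)*b^2 + Real.sqrt 3 * b = 1 := by
    rw [hbdef]; field_simp; rw [show ρ^2*4-1 = 4*ρ^2-1 by ring]; nlinarith [hs2, h3]
  have hsb : Real.sqrt 3 * Real.sqrt (4*ρ^2-1) < 4*ρ-1 := by
    have h4 : (0:ℝ) < 4*ρ-1 + Real.sqrt 3 * Real.sqrt (4*ρ^2-1) := by
      have := Real.sqrt_nonneg (4*ρ^2-1); have := Real.sqrt_nonneg 3
      nlinarith
    nlinarith [hs2, h3, h4, sq_nonneg (ρ-1)]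
  have hb2a : Real.sqrt 3 * b < 2*(1/(1+ρ)) := by
    have h2a : 2*(1/(1+ρ)) = 2/(1+ρ) := by ring
    rw [hbdef, h2a, mul_div_assoc', div_lt_div_iff₀ (by linarith) (by linarith)]
    nlinarith [mul_lt_mul_of_pos_right hsb hρ0, h3]
  exact qcell_measure_lt ρ hρ b hbpos hb2a _
    (fun w hw => qcell_mem_region ρ (1/(1+ρ)) b hρ rfl hbpos hbe w hw)
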